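/- arXiv:math/0312373 — 2 statements merged into one kernel-verified Lean document; each statement's English description precedes it below -/
import Mathlib

section
/- For every odd nonzero integer n and every integer k, the operators on W satisfy α_n ψ̃_k − ψ̃_k α_n = ψ̃_{k−n} (this is the coefficient-wise form of the relation [α_n, ψ(z)] = z^n ψ(z) for the generating function ψ(z) = ∑_{k∈ℤ} z^k ψ̃_k). -/
open scoped BigOperators

noncomputable section

/-- `W`, the real vector space with basis `{v_S}` indexed by finite subsets of `ℤ_{>0}`. -/
abbrev W : Type := Finset ℕ+ →₀ ℝ

/-- the basis vector `v_S` -/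
def vS (S : Finset ℕ+) : W := Finsupp.single S 1

/-- the vacuum vector `v_∅` -/
def vac : W := vS ∅

/-- extend values on basis vectors to a linear map -/
def onBasis (f : Finset ℕ+ → W) : W →ₗ[ℝ] W := Finsupp.lift W ℝ (Finset ℕ+) f

/-- `ψ_k v_S = (-1)^{#{s ∈ S : s > k}} v_{S ∪ {k}}` if `k ∉ S`, else `0`. -/
def psi (k : ℕ+) : W →ₗ[ℝ] W :=
  onBasis fun S =>
    if k ∈ S then 0
    else ((-1 : ℝ) ^ ((S.filter (fun s => k < s)).card)) • vS (insert k S)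

/-- `ψ*_k v_S = (1/2)(-1)^{#{s ∈ S : s > k}} v_{S \ {k}}` if `k ∈ S`, else `0`. -/
def psiStar (k : ℕ+) : W →ₗ[ℝ] W :=
  onBasis fun S =>
    if k ∈ S then ((2 : ℝ)⁻¹ * (-1 : ℝ) ^ ((S.filter (fun s => k < s)).card)) • vS (S.erase k)
    else 0

/-- the parity operator `Π v_S = (-1)^{|S|} v_S`. -/
def par : W →ₗ[ℝ] W := onBasis fun S => ((-1 : ℝ) ^ S.card) • vS S

/-- `α_n = 2 ∑_{j≥1} ψ_j ψ*_{n+j} + Π ψ*_n + 2 ∑_{j=1}^{(n-1)/2} (-1)^j ψ*_j ψ*_{n-j}`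
for odd `n ≥ 1` (on each basis vector the first sum has finitely many nonzero terms:
only `j` with `n + j ∈ S` contribute). -/
def alphaP (n : ℕ+) : W →ₗ[ℝ] W :=
  onBasis fun S =>
    (2 : ℝ) • (∑ s ∈ S.filter (fun s => n < s), psi (s - n) (psiStar s (vS S)))
      + par (psiStar n (vS S))
      + (2 : ℝ) • (∑ j ∈ Finset.Icc 1 (((n : ℕ) - 1) / 2),
          ((-1 : ℝ) ^ j) • psiStar j.toPNat' (psiStar ((n : ℕ) - j).toPNat' (vS S)))

/-- `α_{-n} = 2 ∑_{j≥1} ψ_{n+j} ψ*_j + ψ_n Π + 2 ∑_{j=1}^{(n-1)/2} (-1)^j ψ_{n-j} ψ_j`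
for odd `n ≥ 1` (only `j ∈ S` contribute to the first sum). -/
def alphaM (n : ℕ+) : W →ₗ[ℝ] W :=
  onBasis fun S =>
    (2 : ℝ) • (∑ s ∈ S, psi (n + s) (psiStar s (vS S)))
      + psi n (par (vS S))
      + (2 : ℝ) • (∑ j ∈ Finset.Icc 1 (((n : ℕ) - 1) / 2),
          ((-1 : ℝ) ^ j) • psi ((n : ℕ) - j).toPNat' (psi j.toPNat' (vS S)))

/-- `α_n` for a (nonzero odd) integer `n`. -/
def alpha (n : ℤ) : W →ₗ[ℝ] W :=
  if 0 < n then alphaP n.toNat.toPNat' else if n < 0 then alphaM (-n).toNat.toPNat' else 0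

/-- `ψ̃_k`: `ψ_k` for `k ≥ 1`, `Π/2` for `k = 0`, `(-1)^k ψ*_{-k}` for `k ≤ -1`. -/
def psiT (k : ℤ) : W →ₗ[ℝ] W :=
  if 0 < k then psi k.toNat.toPNat'
  else if k = 0 then (2 : ℝ)⁻¹ • par
  else ((-1 : ℝ) ^ k) • psiStar (-k).toNat.toPNat'

/-- the inner product on `W` with `⟨v_S, v_T⟩ = δ_{S,T} 2^{-|S|}`. -/
def innerW (f g : W) : ℝ := f.sum fun S a => a * g S * (2 : ℝ)⁻¹ ^ S.card


def cnt (k : ℕ+) (S : Finset ℕ+) : ℕ := (S.filter (fun s => k < s)).card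

lemma onBasis_vS (f : Finset ℕ+ → W) (S : Finset ℕ+) : onBasis f (vS S) = f S := by
  simp [onBasis, vS]

lemma psi_vS (k : ℕ+) (S : Finset ℕ+) :
    psi k (vS S) = if k ∈ S then 0 else ((-1 : ℝ) ^ cnt k S) • vS (insert k S) := by
  simp [psi, onBasis_vS, cnt]

lemma psiStar_vS (k : ℕ+) (S : Finset ℕ+) :
    psiStar k (vS S) = if k ∈ S then ((2 : ℝ)⁻¹ * (-1 : ℝ) ^ cnt k S) • vS (S.erase k)
      else 0 := by
  simp [psiStar, onBasis_vS, cnt]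

lemma par_vS (S : Finset ℕ+) : par (vS S) = ((-1 : ℝ) ^ S.card) • vS S := by
  simp [par, onBasis_vS]

lemma w_ext {f g : W →ₗ[ℝ] W} (h : ∀ S, f (vS S) = g (vS S)) : f = g := by
  refine Finsupp.lhom_ext fun S b => ?_
  have : (Finsupp.single S b : W) = b • vS S := by
    simp [vS, Finsupp.smul_single]
  rw [this, map_smul, map_smul, h]

lemma cnt_insert {a : ℕ+} {S : Finset ℕ+} (h : a ∉ S) (b : ℕ+) :
    cnt b (insert a S) = cnt b S + (if b < a then 1 else 0) := by
  unfold cnt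
  rw [Finset.filter_insert]
  split
  · rw [Finset.card_insert_of_notMem (fun hh => h (Finset.mem_filter.1 hh).1)]
  · simp

lemma cnt_erase {a : ℕ+} {S : Finset ℕ+} (h : a ∈ S) (b : ℕ+) :
    cnt b (S.erase a) + (if b < a then 1 else 0) = cnt b S := by
  conv_rhs => rw [← Finset.insert_erase h]
  rw [cnt_insert (Finset.notMem_erase a S)]
lemma sign_flip {x y : ℕ} (h : x = y + 1) : (-1 : ℝ) ^ x + (-1 : ℝ) ^ y = 0 := by
  rw [h, pow_succ]; ring

lemma psi_psi (a b : ℕ+) : psi a ∘ₗ psi b + psi b ∘ₗ psi a = 0 := by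
  apply w_ext; intro S
  simp only [LinearMap.add_apply, LinearMap.comp_apply, LinearMap.zero_apply, psi_vS]
  by_cases hb : b ∈ S <;> by_cases ha : a ∈ S <;>
    simp [ha, hb, Finset.mem_insert, psi_vS]
  · -- a ∉ S, b ∉ S
    by_cases hab : a = b
    · subst hab; simp
    · simp [hab, Ne.symm hab, cnt_insert ha, cnt_insert hb, Finset.insert_comm a b,
        smul_smul, ← pow_add]
      rw [← add_smul]
      rcases lt_or_gt_of_ne hab with h | h
      · rw [sign_flip (by simp [h, not_lt_of_gt h]; omega), zero_smul]
      · rw [add_comm ((-1:ℝ)^_), sign_flip (by simp [h, not_lt_of_gt h]; omega), zero_smul]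
lemma psiStar_psiStar (a b : ℕ+) : psiStar a ∘ₗ psiStar b + psiStar b ∘ₗ psiStar a = 0 := by
  apply w_ext; intro S
  simp only [LinearMap.add_apply, LinearMap.comp_apply, LinearMap.zero_apply, psiStar_vS]
  by_cases hb : b ∈ S <;> by_cases ha : a ∈ S <;>
    simp [ha, hb, psiStar_vS, Finset.mem_erase]
  by_cases hab : a = b
  · subst hab; simp
  · simp only [hab, Ne.symm hab, ne_eq, not_false_eq_true, true_and, if_true, ha, hb,
      smul_smul]
    rw [Finset.erase_right_comm (a:=a) (b:=b)]
    simp only [if_false]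
    rw [← add_smul]
    have h1 := cnt_erase hb a
    have h2 := cnt_erase ha b
    rcases lt_or_gt_of_ne hab with h | h <;>
      simp only [h, not_lt_of_gt h, if_true, if_false, add_zero] at h1 h2 <;>
      rw [← h1, ← h2] <;>
      rw [show (0:W) = (0:ℝ) • vS ((S.erase b).erase a) by simp] <;>
      congr 1 <;> simp [pow_succ, pow_add] <;> ring
lemma psi_psiStar (a b : ℕ+) :
    psi a ∘ₗ psiStar b + psiStar b ∘ₗ psi a
      = if a = b then (2 : ℝ)⁻¹ • (LinearMap.id : W →ₗ[ℝ] W) else 0 := by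
  apply w_ext; intro S
  simp only [LinearMap.add_apply, LinearMap.comp_apply, LinearMap.zero_apply,
    LinearMap.smul_apply, LinearMap.id_apply, psi_vS, psiStar_vS]
  by_cases hab : a = b
  · subst hab
    simp only [if_true]
    by_cases ha : a ∈ S
    · have hc : cnt a (S.erase a) = cnt a S := by
        have := cnt_erase ha a; simpa using this
      simp only [ha, if_true, map_zero, add_zero, map_smul, psi_vS,
        Finset.notMem_erase, if_false, hc, Finset.insert_erase ha, smul_smul,
        LinearMap.smul_apply, LinearMap.id_apply]
      rw [show (2:ℝ)⁻¹ * (-1:ℝ) ^ cnt a S * (-1:ℝ) ^ cnt a S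
          = (2:ℝ)⁻¹ * ((-1:ℝ)*(-1)) ^ cnt a S by rw [mul_pow]; ring]
      norm_num
    · have hc : cnt a (insert a S) = cnt a S := by
        have := cnt_insert ha a; simpa using this
      simp only [ha, if_true, if_false, map_zero, zero_add, map_smul, psiStar_vS,
        Finset.mem_insert_self, Finset.erase_insert ha, hc, smul_smul,
        LinearMap.smul_apply, LinearMap.id_apply]
      rw [show (-1:ℝ) ^ cnt a S * ((2:ℝ)⁻¹ * (-1:ℝ) ^ cnt a S)
          = (2:ℝ)⁻¹ * ((-1:ℝ)*(-1)) ^ cnt a S by rw [mul_pow]; ring]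
      norm_num
  · simp only [hab, if_false]
    by_cases hb : b ∈ S <;> by_cases ha : a ∈ S <;>
      simp [ha, hb, hab, Ne.symm hab, psi_vS, psiStar_vS, Finset.mem_erase, Finset.mem_insert]
    -- b ∈ S, a ∉ S
    have h1 := cnt_erase hb a
    have h2 := cnt_insert ha b
    rw [smul_smul, smul_smul, Finset.erase_insert_of_ne hab]
    rw [← add_smul, show (0:W) = (0:ℝ) • vS (insert a (S.erase b)) by simp]
    congr 1
    rcases lt_or_gt_of_ne hab with h | h <;>
      simp only [h, not_lt_of_gt h, if_true, if_false, add_zero] at h1 h2 <;>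
      rw [← h1, h2] <;> simp [pow_succ, pow_add] <;> ring
lemma par_psi (a : ℕ+) : par ∘ₗ psi a = -(psi a ∘ₗ par) := by
  apply w_ext; intro S
  simp only [LinearMap.comp_apply, LinearMap.neg_apply, psi_vS, par_vS]
  by_cases ha : a ∈ S
  · simp [ha, psi_vS, par_vS]
  · simp [ha, psi_vS, par_vS, Finset.card_insert_of_notMem ha, smul_smul, pow_succ]
    ring_nf
lemma par_psiStar (a : ℕ+) : par ∘ₗ psiStar a = -(psiStar a ∘ₗ par) := by
  apply w_ext; intro S
  simp only [LinearMap.comp_apply, LinearMap.neg_apply, psiStar_vS, par_vS]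
  by_cases ha : a ∈ S
  · have : S.card = (S.erase a).card + 1 := by
      rw [Finset.card_erase_of_mem ha]
      have := Finset.card_pos.2 ⟨a, ha⟩; omega
    simp only [psiStar_vS, ha, if_true, map_smul, par_vS, smul_smul]
    rw [← neg_smul]
    congr 1
    rw [this, pow_succ]
    ring
  · simp [ha, psiStar_vS, par_vS]
lemma par_par : par ∘ₗ par = LinearMap.id := by
  apply w_ext; intro S
  simp [par_vS, smul_smul, ← pow_add, show S.card + S.card = 2 * S.card by ring, pow_mul]
lemma toP_coe {i : ℤ} (hi : 0 < i) : ((i.toNat.toPNat' : ℕ+) : ℕ) = i.toNat :=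
  PNat.toPNat'_coe (by omega)

lemma toP_eq_iff {i j : ℤ} (hi : 0 < i) (hj : 0 < j) :
    i.toNat.toPNat' = j.toNat.toPNat' ↔ i = j := by
  constructor
  · intro h
    have := congrArg (fun x : ℕ+ => (x : ℕ)) h
    simp only [toP_coe hi, toP_coe hj] at this
    omega
  · rintro rfl; rfl

lemma nz_neg (j : ℤ) : (-1 : ℝ) ^ (-j) = (-1 : ℝ) ^ j := by
  rcases Int.even_or_odd j with h | h
  · rw [h.neg_one_zpow, (h.neg).neg_one_zpow]
  · rw [h.neg_one_zpow, (h.neg).neg_one_zpow]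

lemma psiT_pos {i : ℤ} (hi : 0 < i) : psiT i = psi i.toNat.toPNat' := by
  simp [psiT, hi]

lemma psiT_zero : psiT 0 = (2 : ℝ)⁻¹ • par := by simp [psiT]

lemma psiT_neg {i : ℤ} (hi : i < 0) :
    psiT i = ((-1 : ℝ) ^ i) • psiStar (-i).toNat.toPNat' := by
  simp [psiT, not_lt.2 hi.le, hi.ne]

lemma psiT_anti (i j : ℤ) :
    psiT i ∘ₗ psiT j + psiT j ∘ₗ psiT i
      = if i + j = 0 then ((-1 : ℝ) ^ i * (2 : ℝ)⁻¹) • (LinearMap.id : W →ₗ[ℝ] W)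
        else 0 := by
  rcases lt_trichotomy 0 i with hi | hi | hi <;> rcases lt_trichotomy 0 j with hj | hj | hj
  · rw [if_neg (by omega), psiT_pos hi, psiT_pos hj]
    exact psi_psi _ _
  · subst hj
    rw [if_neg (by omega), psiT_pos hi, psiT_zero]
    rw [LinearMap.comp_smul, LinearMap.smul_comp, ← smul_add, par_psi]
    abel_nf; simp
  · rw [psiT_pos hi, psiT_neg hj]
    rw [LinearMap.comp_smul, LinearMap.smul_comp, ← smul_add, psi_psiStar]
    by_cases h : i + j = 0
    · rw [if_pos h, if_pos ((toP_eq_iff hi (by omega : (0:ℤ) < -j)).2 (by omega)),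
        smul_smul]
      congr 1
      rw [show i = -j by omega, nz_neg]
    · rw [if_neg h, if_neg (fun hh => h (by
        have := (toP_eq_iff hi (by omega : (0:ℤ) < -j)).1 hh; omega)), smul_zero]
  · subst hi
    rw [if_neg (by omega), psiT_pos hj, psiT_zero]
    rw [LinearMap.comp_smul, LinearMap.smul_comp, ← smul_add, add_comm, par_psi]
    abel_nf; simp
  · subst hi; subst hj
    simp only [add_zero, zpow_zero, one_mul, if_true]
    rw [psiT_zero]
    rw [LinearMap.comp_smul, LinearMap.smul_comp, smul_smul, ← two_smul ℝ, smul_smul,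
      par_par]
    norm_num
  · subst hi
    rw [if_neg (by omega), psiT_neg hj, psiT_zero]
    rw [LinearMap.comp_smul, LinearMap.comp_smul, LinearMap.smul_comp,
      LinearMap.smul_comp, smul_smul, smul_smul, mul_comm ((2:ℝ)⁻¹), ← smul_add,
      par_psiStar]
    abel_nf; simp
  · rw [psiT_neg hi, psiT_pos hj]
    rw [LinearMap.comp_smul, LinearMap.smul_comp, ← smul_add, add_comm, psi_psiStar]
    by_cases h : i + j = 0
    · rw [if_pos h, if_pos ((toP_eq_iff hj (by omega : (0:ℤ) < -i)).2 (by omega)),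
        smul_smul]
    · rw [if_neg h, if_neg (fun hh => h (by
        have := (toP_eq_iff hj (by omega : (0:ℤ) < -i)).1 hh; omega)), smul_zero]
  · subst hj
    rw [if_neg (by omega), psiT_neg hi, psiT_zero]
    rw [LinearMap.comp_smul, LinearMap.comp_smul, LinearMap.smul_comp,
      LinearMap.smul_comp, smul_smul, smul_smul, mul_comm, ← smul_add, add_comm,
      par_psiStar]
    abel_nf; simp
  · rw [if_neg (by omega), psiT_neg hi, psiT_neg hj]
    rw [LinearMap.comp_smul, LinearMap.smul_comp, smul_smul, LinearMap.comp_smul,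
      LinearMap.smul_comp, smul_smul, mul_comm ((-1:ℝ)^j), ← smul_add, psiStar_psiStar,
      smul_zero]
def Aop (n M : ℤ) : W →ₗ[ℝ] W :=
  ∑ j ∈ Finset.Icc ((1 - n) / 2) M, ((-2 : ℝ) * (-1 : ℝ) ^ j) • (psiT j ∘ₗ psiT (-n - j))

lemma sumW_comp {ι : Type*} (s : Finset ι) (f : ι → W →ₗ[ℝ] W) (g : W →ₗ[ℝ] W) :
    (∑ i ∈ s, f i) ∘ₗ g = ∑ i ∈ s, f i ∘ₗ g := by
  ext x; simp [LinearMap.sum_apply, LinearMap.comp_apply]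

lemma comp_sumW {ι : Type*} (s : Finset ι) (f : ι → W →ₗ[ℝ] W) (g : W →ₗ[ℝ] W) :
    g ∘ₗ (∑ i ∈ s, f i) = ∑ i ∈ s, g ∘ₗ f i := by
  ext x; simp [LinearMap.sum_apply, LinearMap.comp_apply]

lemma psiT_swap (b k : ℤ) :
    psiT b ∘ₗ psiT k
      = (if b + k = 0 then ((-1 : ℝ) ^ b * (2 : ℝ)⁻¹) else 0) • LinearMap.id
        - psiT k ∘ₗ psiT b := by
  split_ifs with h
  · have h2 : psiT b ∘ₗ psiT k
        = ((-1 : ℝ) ^ b * (2 : ℝ)⁻¹) • (LinearMap.id : W →ₗ[ℝ] W) - psiT k ∘ₗ psiT b :=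
      eq_sub_of_add_eq (G := W →ₗ[ℝ] W) ((psiT_anti b k).trans (if_pos h))
    exact h2
  · have h2 : psiT b ∘ₗ psiT k = 0 - psiT k ∘ₗ psiT b :=
      eq_sub_of_add_eq (G := W →ₗ[ℝ] W) ((psiT_anti b k).trans (if_neg h))
    rw [h2]
    congr 1
    exact (zero_smul ℝ _).symm

lemma term_comm (a b k : ℤ) :
    (psiT a ∘ₗ psiT b) ∘ₗ psiT k - psiT k ∘ₗ (psiT a ∘ₗ psiT b)
      = (if b + k = 0 then ((-1 : ℝ) ^ b * (2 : ℝ)⁻¹) else 0) • psiT a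
        - (if a + k = 0 then ((-1 : ℝ) ^ a * (2 : ℝ)⁻¹) else 0) • psiT b := by
  rw [LinearMap.comp_assoc, psiT_swap b k, LinearMap.comp_sub, LinearMap.comp_smul,
    LinearMap.comp_id, ← LinearMap.comp_assoc, psiT_swap a k, LinearMap.sub_comp,
    LinearMap.smul_comp, LinearMap.id_comp, LinearMap.comp_assoc]
  abel

lemma Aop_comm (n M k : ℤ) (hn : Odd n) (h1 : k - n ≤ M) (h2 : -k ≤ M) :
    Aop n M ∘ₗ psiT k - psiT k ∘ₗ Aop n M = psiT (k - n) := by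
  obtain ⟨m, rfl⟩ := hn
  set n : ℤ := 2 * m + 1 with hndef
  have hodd : Odd n := ⟨m, by omega⟩
  have hne : ((-1 : ℝ)) ≠ 0 := by norm_num
  apply w_ext; intro T
  simp only [Aop, LinearMap.sub_apply, LinearMap.comp_apply, LinearMap.sum_apply,
    LinearMap.smul_apply, map_sum, map_smul]
  rw [← Finset.sum_sub_distrib]
  have hterm : ∀ j ∈ Finset.Icc ((1 - n) / 2) M,
      ((-2 : ℝ) * (-1 : ℝ) ^ j) • psiT j (psiT (-n - j) (psiT k (vS T)))
        - ((-2 : ℝ) * (-1 : ℝ) ^ j) • psiT k (psiT j (psiT (-n - j) (vS T)))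
      = (if j = k - n then ((-2 : ℝ) * (-1 : ℝ) ^ j * ((-1 : ℝ) ^ (-n - j) * 2⁻¹))
            • psiT j (vS T) else 0)
        - (if j = -k then ((-2 : ℝ) * (-1 : ℝ) ^ j * ((-1 : ℝ) ^ j * 2⁻¹))
            • psiT (-n - j) (vS T) else 0) := by
    intro j _
    have h := congrArg (fun f : W →ₗ[ℝ] W => f (vS T)) (term_comm j (-n - j) k)
    simp only [LinearMap.sub_apply, LinearMap.comp_apply, LinearMap.smul_apply] at h
    rw [← smul_sub, h, smul_sub]
    congr 1
    · by_cases hj : j = k - n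
      · rw [if_pos (by omega : -n - j + k = 0), if_pos hj, smul_smul]
      · rw [if_neg (by omega : ¬(-n - j + k = 0)), if_neg hj, zero_smul, smul_zero]
    · by_cases hj : j = -k
      · rw [if_pos (by omega : j + k = 0), if_pos hj, smul_smul]
      · rw [if_neg (by omega : ¬(j + k = 0)), if_neg hj, zero_smul, smul_zero]
  rw [Finset.sum_congr rfl hterm, Finset.sum_sub_distrib,
    Finset.sum_ite_eq' _ (k - n), Finset.sum_ite_eq' _ (-k)]
  by_cases hk : k - n ∈ Finset.Icc ((1 - n) / 2) M
  · have hk2 : -k ∉ Finset.Icc ((1 - n) / 2) M := by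
      simp only [Finset.mem_Icc] at hk ⊢; omega
    rw [if_pos hk, if_neg hk2, sub_zero, show (-n - (k - n)) = -k by ring]
    have hco : ((-2 : ℝ) * (-1 : ℝ) ^ (k - n) * ((-1 : ℝ) ^ (-k) * 2⁻¹)) = 1 := by
      have hz : (-1 : ℝ) ^ (k - n) * (-1 : ℝ) ^ (-k) = -1 := by
        rw [← zpow_add₀ hne, show k - n + -k = -n by ring]
        exact (hodd.neg).neg_one_zpow
      calc (-2 : ℝ) * (-1 : ℝ) ^ (k - n) * ((-1 : ℝ) ^ (-k) * 2⁻¹)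
          = ((-1 : ℝ) ^ (k - n) * (-1 : ℝ) ^ (-k)) * (-2 * 2⁻¹) := by ring
        _ = 1 := by rw [hz]; norm_num
    rw [hco, one_smul]
  · have hk2 : -k ∈ Finset.Icc ((1 - n) / 2) M := by
      simp only [Finset.mem_Icc] at hk ⊢; omega
    rw [if_neg hk, if_pos hk2, zero_sub, show (-n - -k) = k - n by ring]
    have hco : ((-2 : ℝ) * (-1 : ℝ) ^ (-k) * ((-1 : ℝ) ^ (-k) * 2⁻¹)) = -1 := by
      have hz : (-1 : ℝ) ^ (-k) * (-1 : ℝ) ^ (-k) = 1 := by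
        rw [← zpow_add₀ hne, show (-k + -k : ℤ) = 2 * (-k) by ring, zpow_mul]
        norm_num
      calc (-2 : ℝ) * (-1 : ℝ) ^ (-k) * ((-1 : ℝ) ^ (-k) * 2⁻¹)
          = ((-1 : ℝ) ^ (-k) * (-1 : ℝ) ^ (-k)) * (-2 * 2⁻¹) := by ring
        _ = -1 := by rw [hz]; norm_num
    rw [hco, neg_smul, neg_neg, one_smul]
lemma toPNat_roundtrip (s : ℕ+) : ((s : ℕ)).toPNat' = s :=
  PNat.coe_injective (PNat.toPNat'_coe s.pos)

lemma alpha_eq_Aop (n : ℤ) (hn : Odd n) (hn0 : n ≠ 0) (S : Finset ℕ+) (M : ℤ)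
    (hMn : |n| ≤ M) (hM : ∀ s ∈ S, (s : ℤ) + |n| ≤ M) :
    alpha n (vS S) = Aop n M (vS S) := by
  have hMapply : ∀ s ∈ S, (s : ℤ) + |n| ≤ M := hM
  rcases lt_or_gt_of_ne hn0 with hneg | hpos
  · -- n < 0
    have habs : |n| = -n := abs_of_neg hneg
    obtain ⟨m2, hm2⟩ := id hn
    have hq : (((-n).toNat.toPNat' : ℕ+) : ℕ) = (-n).toNat := toP_coe (by omega)
    set q : ℕ+ := (-n).toNat.toPNat' with hqdef
    simp only [alpha, if_neg (by omega : ¬ (0:ℤ) < n), if_pos hneg]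
    rw [show alphaM q (vS S)
        = (2 : ℝ) • (∑ s ∈ S, psi (q + s) (psiStar s (vS S)))
          + psi q (par (vS S))
          + (2 : ℝ) • (∑ j ∈ Finset.Icc 1 (((q : ℕ) - 1) / 2),
              ((-1 : ℝ) ^ j) • psi ((q : ℕ) - j).toPNat' (psi j.toPNat' (vS S)))
      from onBasis_vS _ S]
    simp only [Aop, LinearMap.sum_apply, LinearMap.smul_apply, LinearMap.comp_apply]
    have hIcc : Finset.Icc ((1 - n) / 2) M
        = (Finset.Icc ((1 - n) / 2) (-n - 1) ∪ Finset.Icc (-n) (-n))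
          ∪ Finset.Icc (-n + 1) M := by
      ext x
      simp only [Finset.mem_Icc, Finset.mem_union]
      omega
    have hd1 : Disjoint (Finset.Icc ((1 - n) / 2) (-n - 1) ∪ Finset.Icc (-n) (-n))
        (Finset.Icc (-n + 1) M) := by
      rw [Finset.disjoint_left]
      intro x hx hx'
      simp only [Finset.mem_Icc, Finset.mem_union] at hx hx'
      omega
    have hd2 : Disjoint (Finset.Icc ((1 - n) / 2) (-n - 1)) (Finset.Icc (-n) (-n)) := by
      rw [Finset.disjoint_left]
      intro x hx hx'
      simp only [Finset.mem_Icc] at hx hx'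
      omega
    rw [hIcc, Finset.sum_union hd1, Finset.sum_union hd2]
    -- middle piece
    have hB : ∑ j ∈ Finset.Icc (-n) (-n),
        ((-2 : ℝ) * (-1 : ℝ) ^ j) • psiT j (psiT (-n - j) (vS S))
        = psi q (par (vS S)) := by
      rw [Finset.Icc_self, Finset.sum_singleton, psiT_pos (by omega : (0:ℤ) < -n),
        show -n - -n = 0 by ring, psiT_zero]
      simp only [LinearMap.smul_apply, map_smul, smul_smul]
      rw [hn.neg.neg_one_zpow, ← hqdef,
        show ((-2:ℝ) * -1 * 2⁻¹) = 1 by norm_num, one_smul]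
    -- tail piece
    have hC : ∑ j ∈ Finset.Icc (-n + 1) M,
        ((-2 : ℝ) * (-1 : ℝ) ^ j) • psiT j (psiT (-n - j) (vS S))
        = (2 : ℝ) • (∑ s ∈ S, psi (q + s) (psiStar s (vS S))) := by
      have hbody : ∀ j ∈ Finset.Icc (-n + 1) M,
          ((-2 : ℝ) * (-1 : ℝ) ^ j) • psiT j (psiT (-n - j) (vS S))
          = (2 : ℝ) • psi j.toNat.toPNat' (psiStar ((n + j).toNat.toPNat') (vS S)) := by
        intro j hj
        simp only [Finset.mem_Icc] at hj
        rw [psiT_pos (by omega : (0:ℤ) < j), psiT_neg (by omega : -n - j < 0),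
          show -(-n - j) = n + j by ring]
        simp only [LinearMap.smul_apply, map_smul, smul_smul]
        congr 1
        have hz : (-1 : ℝ) ^ j * (-1 : ℝ) ^ (-n - j) = -1 := by
          rw [← zpow_add₀ (by norm_num : (-1:ℝ) ≠ 0), show j + (-n - j) = -n by ring]
          exact hn.neg.neg_one_zpow
        calc (-2 : ℝ) * (-1 : ℝ) ^ j * (-1 : ℝ) ^ (-n - j)
            = -2 * ((-1 : ℝ) ^ j * (-1 : ℝ) ^ (-n - j)) := by ring
          _ = 2 := by rw [hz]; ring
      rw [Finset.sum_congr rfl hbody]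
      set T : Finset ℤ := S.image (fun (s : ℕ+) => ((s : ℕ) : ℤ) - n) with hTdef
      have hsub : T ⊆ Finset.Icc (-n + 1) M := by
        intro j hj
        simp only [hTdef, Finset.mem_image] at hj
        obtain ⟨s, hsS, rfl⟩ := hj
        have := hM s hsS
        have hs1 : 1 ≤ (s : ℕ) := s.one_le
        simp only [Finset.mem_Icc]
        omega
      have hvan : ∀ j ∈ Finset.Icc (-n + 1) M, j ∉ T →
          (2 : ℝ) • psi j.toNat.toPNat' (psiStar ((n + j).toNat.toPNat') (vS S)) = 0 := by
        intro j hj hjT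
        simp only [Finset.mem_Icc] at hj
        by_cases hmem : (n + j).toNat.toPNat' ∈ S
        · exfalso
          apply hjT
          simp only [hTdef, Finset.mem_image]
          have heq : (((n + j).toNat.toPNat' : ℕ) : ℤ) - n = j := by
            rw [toP_coe (by omega : (0:ℤ) < n + j)]
            omega
          exact ⟨(n + j).toNat.toPNat', hmem, heq⟩
        · rw [psiStar_vS, if_neg hmem, map_zero, smul_zero]
      rw [← Finset.sum_subset hsub hvan, hTdef,
        Finset.sum_image (by
          intro a _ b _ hab
          have h2 : (a : ℕ) = (b : ℕ) := by simp only at hab; omega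
          exact PNat.coe_injective h2)]
      rw [Finset.smul_sum]
      refine Finset.sum_congr rfl ?_
      intro s hsS
      have hs1 : 1 ≤ (s : ℕ) := s.one_le
      have e1 : (((s : ℕ) : ℤ) - n).toNat.toPNat' = q + s := by
        apply PNat.coe_injective
        rw [toP_coe (by omega : (0:ℤ) < ((s : ℕ) : ℤ) - n), PNat.add_coe]
        omega
      have e2 : (n + (((s : ℕ) : ℤ) - n)).toNat.toPNat' = s := by
        rw [show n + (((s : ℕ) : ℤ) - n) = ((s : ℕ) : ℤ) by ring]
        simp only [Int.toNat_natCast]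
        exact toPNat_roundtrip s
      rw [e1, e2]
    -- head piece
    have hA : ∑ j ∈ Finset.Icc ((1 - n) / 2) (-n - 1),
        ((-2 : ℝ) * (-1 : ℝ) ^ j) • psiT j (psiT (-n - j) (vS S))
        = (2 : ℝ) • (∑ j ∈ Finset.Icc 1 (((q : ℕ) - 1) / 2),
            ((-1 : ℝ) ^ j) • psi ((q : ℕ) - j).toPNat' (psi j.toPNat' (vS S))) := by
      rw [Finset.smul_sum]
      refine Finset.sum_bij' (fun j (_ : j ∈ Finset.Icc ((1 - n) / 2) (-n - 1)) => (-n - j).toNat)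
        (fun i (_ : i ∈ Finset.Icc 1 (((q : ℕ) - 1) / 2)) => -n - (i : ℤ)) ?_ ?_ ?_ ?_ ?_
      · intro j hj
        simp only [Finset.mem_Icc] at hj
        show (-n - j).toNat ∈ Finset.Icc 1 (((q : ℕ) - 1) / 2)
        simp only [Finset.mem_Icc]
        omega
      · intro i hi
        simp only [Finset.mem_Icc] at hi
        show -n - (i : ℤ) ∈ Finset.Icc ((1 - n) / 2) (-n - 1)
        simp only [Finset.mem_Icc]
        omega
      · intro j hj
        simp only [Finset.mem_Icc] at hj
        show -n - (((-n - j).toNat : ℕ) : ℤ) = j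
        omega
      · intro i hi
        simp only [Finset.mem_Icc] at hi
        show (-n - (-n - (i : ℤ))).toNat = i
        omega
      · intro j hj
        simp only [Finset.mem_Icc] at hj
        show ((-2 : ℝ) * (-1 : ℝ) ^ j) • psiT j (psiT (-n - j) (vS S))
          = (2 : ℝ) • (((-1 : ℝ) ^ ((-n - j).toNat)) • psi ((q : ℕ) - (-n - j).toNat).toPNat'
              (psi ((-n - j).toNat).toPNat' (vS S)))
        rw [psiT_pos (by omega : (0:ℤ) < j), psiT_pos (by omega : (0:ℤ) < -n - j),
          show ((q : ℕ) - (-n - j).toNat) = j.toNat by omega,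
          show (j.toNat).toPNat' = j.toNat.toPNat' from rfl, smul_smul]
        congr 1
        have h3 : (-1 : ℝ) ^ ((-n - j).toNat) = -(-1 : ℝ) ^ j := by
          rw [show ((-1 : ℝ)) ^ ((-n - j).toNat) = (-1 : ℝ) ^ ((((-n - j).toNat : ℕ)) : ℤ) from
            (zpow_natCast _ _).symm, show ((((-n - j).toNat : ℕ)) : ℤ) = -n - j by omega,
            show -n - j = -n + -j by ring, zpow_add₀ (by norm_num : (-1:ℝ) ≠ 0),
            hn.neg.neg_one_zpow, nz_neg]
          ring
        rw [h3]
        ring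
    rw [hA, hB, hC]
    abel
  · -- n > 0
    have habs : |n| = n := abs_of_pos hpos
    have hM0 : (0 : ℤ) ≤ M := by omega
    have hp : ((n.toNat.toPNat' : ℕ+) : ℕ) = n.toNat := toP_coe hpos
    obtain ⟨m2, hm2⟩ := id hn
    set p : ℕ+ := n.toNat.toPNat' with hpdef
    simp only [alpha, if_pos hpos]
    rw [show alphaP p (vS S)
        = (2 : ℝ) • (∑ s ∈ S.filter (fun s => p < s), psi (s - p) (psiStar s (vS S)))
          + par (psiStar p (vS S))
          + (2 : ℝ) • (∑ j ∈ Finset.Icc 1 (((p : ℕ) - 1) / 2),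
              ((-1 : ℝ) ^ j) • psiStar j.toPNat' (psiStar ((p : ℕ) - j).toPNat' (vS S)))
      from onBasis_vS _ S]
    simp only [Aop, LinearMap.sum_apply, LinearMap.smul_apply, LinearMap.comp_apply]
    have hIcc : Finset.Icc ((1 - n) / 2) M
        = (Finset.Icc ((1 - n) / 2) (-1) ∪ Finset.Icc 0 0) ∪ Finset.Icc 1 M := by
      ext x
      simp only [Finset.mem_Icc, Finset.mem_union]
      omega
    have hd1 : Disjoint (Finset.Icc ((1 - n) / 2) (-1) ∪ Finset.Icc (0:ℤ) 0)
        (Finset.Icc 1 M) := by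
      rw [Finset.disjoint_left]
      intro x hx hx'
      simp only [Finset.mem_Icc, Finset.mem_union] at hx hx'
      omega
    have hd2 : Disjoint (Finset.Icc ((1 - n) / 2) (-1)) (Finset.Icc (0:ℤ) 0) := by
      rw [Finset.disjoint_left]
      intro x hx hx'
      simp only [Finset.mem_Icc] at hx hx'
      omega
    rw [hIcc, Finset.sum_union hd1, Finset.sum_union hd2]
    -- the zero piece
    have hB : ∑ j ∈ Finset.Icc (0:ℤ) 0,
        ((-2 : ℝ) * (-1 : ℝ) ^ j) • psiT j (psiT (-n - j) (vS S))
        = par (psiStar p (vS S)) := by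
      rw [Finset.Icc_self, Finset.sum_singleton, psiT_zero,
        show -n - 0 = -n by ring, psiT_neg (by omega : -n < 0),
        show -(-n) = n by ring]
      simp only [LinearMap.smul_apply, map_smul, smul_smul, zpow_zero]
      rw [hn.neg.neg_one_zpow, ← hpdef,
        show ((-2:ℝ) * 1 * (-1 * 2⁻¹)) = 1 by norm_num, one_smul]
    -- the positive piece
    have hC : ∑ j ∈ Finset.Icc (1:ℤ) M,
        ((-2 : ℝ) * (-1 : ℝ) ^ j) • psiT j (psiT (-n - j) (vS S))
        = (2 : ℝ) • (∑ s ∈ S.filter (fun s => p < s), psi (s - p) (psiStar s (vS S))) := by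
      have hbody : ∀ j ∈ Finset.Icc (1:ℤ) M,
          ((-2 : ℝ) * (-1 : ℝ) ^ j) • psiT j (psiT (-n - j) (vS S))
          = (2 : ℝ) • psi j.toNat.toPNat' (psiStar ((n + j).toNat.toPNat') (vS S)) := by
        intro j hj
        simp only [Finset.mem_Icc] at hj
        rw [psiT_pos (by omega : (0:ℤ) < j), psiT_neg (by omega : -n - j < 0),
          show -(-n - j) = n + j by ring]
        simp only [LinearMap.smul_apply, map_smul, smul_smul]
        congr 1
        have hz : (-1 : ℝ) ^ j * (-1 : ℝ) ^ (-n - j) = -1 := by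
          rw [← zpow_add₀ (by norm_num : (-1:ℝ) ≠ 0), show j + (-n - j) = -n by ring]
          exact hn.neg.neg_one_zpow
        calc (-2 : ℝ) * (-1 : ℝ) ^ j * (-1 : ℝ) ^ (-n - j)
            = -2 * ((-1 : ℝ) ^ j * (-1 : ℝ) ^ (-n - j)) := by ring
          _ = 2 := by rw [hz]; ring
      rw [Finset.sum_congr rfl hbody]
      set T : Finset ℤ := (S.filter (fun s => p < s)).image
          (fun (s : ℕ+) => ((s : ℕ) : ℤ) - n) with hTdef
      have hsub : T ⊆ Finset.Icc (1:ℤ) M := by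
        intro j hj
        simp only [hTdef, Finset.mem_image, Finset.mem_filter] at hj
        obtain ⟨s, ⟨hsS, hps⟩, rfl⟩ := hj
        have := hM s hsS
        have hlt : (p : ℕ) < (s : ℕ) := hps
        simp only [Finset.mem_Icc]
        omega
      have hvan : ∀ j ∈ Finset.Icc (1:ℤ) M, j ∉ T →
          (2 : ℝ) • psi j.toNat.toPNat' (psiStar ((n + j).toNat.toPNat') (vS S)) = 0 := by
        intro j hj hjT
        simp only [Finset.mem_Icc] at hj
        by_cases hmem : (n + j).toNat.toPNat' ∈ S
        · exfalso
          apply hjT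
          simp only [hTdef, Finset.mem_image, Finset.mem_filter]
          have hlt : p < (n + j).toNat.toPNat' := by
            rw [← PNat.coe_lt_coe, hp, toP_coe (by omega : (0:ℤ) < n + j)]
            omega
          have heq : (((n + j).toNat.toPNat' : ℕ) : ℤ) - n = j := by
            rw [toP_coe (by omega : (0:ℤ) < n + j)]
            omega
          exact ⟨(n + j).toNat.toPNat', ⟨hmem, hlt⟩, heq⟩
        · rw [psiStar_vS, if_neg hmem, map_zero, smul_zero]
      rw [← Finset.sum_subset hsub hvan, hTdef,
        Finset.sum_image (by
          intro a _ b _ hab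
          have : (a : ℕ) = (b : ℕ) := by simp only at hab; omega
          exact PNat.coe_injective this)]
      rw [Finset.smul_sum]
      refine Finset.sum_congr rfl ?_
      intro s hs
      simp only [Finset.mem_filter] at hs
      obtain ⟨hsS, hps⟩ := hs
      have hlt : (p : ℕ) < (s : ℕ) := hps
      have e1 : (((s : ℕ) : ℤ) - n).toNat.toPNat' = s - p := by
        apply PNat.coe_injective
        rw [toP_coe (by omega : (0:ℤ) < ((s : ℕ) : ℤ) - n), PNat.sub_coe, if_pos hps]
        omega
      have e2 : (n + (((s : ℕ) : ℤ) - n)).toNat.toPNat' = s := by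
        rw [show n + (((s : ℕ) : ℤ) - n) = ((s : ℕ) : ℤ) by ring]
        simp only [Int.toNat_natCast]
        exact toPNat_roundtrip s
      rw [e1, e2]
    -- the negative piece
    have hA : ∑ j ∈ Finset.Icc ((1 - n) / 2) (-1),
        ((-2 : ℝ) * (-1 : ℝ) ^ j) • psiT j (psiT (-n - j) (vS S))
        = (2 : ℝ) • (∑ j ∈ Finset.Icc 1 (((p : ℕ) - 1) / 2),
            ((-1 : ℝ) ^ j) • psiStar j.toPNat' (psiStar ((p : ℕ) - j).toPNat' (vS S))) := by
      rw [Finset.smul_sum]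
      refine Finset.sum_bij' (fun j (_ : j ∈ Finset.Icc ((1 - n) / 2) (-1)) => (-j).toNat)
        (fun i (_ : i ∈ Finset.Icc 1 (((p : ℕ) - 1) / 2)) => -(i : ℤ)) ?_ ?_ ?_ ?_ ?_
      · intro j hj
        simp only [Finset.mem_Icc] at hj
        show (-j).toNat ∈ Finset.Icc 1 (((p : ℕ) - 1) / 2)
        simp only [Finset.mem_Icc]
        omega
      · intro i hi
        simp only [Finset.mem_Icc] at hi
        show -(i : ℤ) ∈ Finset.Icc ((1 - n) / 2) (-1)
        simp only [Finset.mem_Icc]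
        omega
      · intro j hj
        simp only [Finset.mem_Icc] at hj
        show -(((-j).toNat : ℕ) : ℤ) = j
        omega
      · intro i hi
        simp only [Finset.mem_Icc] at hi
        show (-(-(i : ℤ))).toNat = i
        omega
      · intro j hj
        simp only [Finset.mem_Icc] at hj
        show ((-2 : ℝ) * (-1 : ℝ) ^ j) • psiT j (psiT (-n - j) (vS S))
          = (2 : ℝ) • (((-1 : ℝ) ^ ((-j).toNat)) • psiStar ((-j).toNat).toPNat'
              (psiStar ((p : ℕ) - (-j).toNat).toPNat' (vS S)))
        rw [psiT_neg (by omega : j < 0), psiT_neg (by omega : -n - j < 0),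
          show -(-n - j) = n + j by ring,
          show ((n + j).toNat) = ((p : ℕ) - (-j).toNat) from by omega]
        simp only [LinearMap.smul_apply, map_smul, smul_smul]
        congr 1
        have hne : ((-1 : ℝ)) ≠ 0 := by norm_num
        have h1 : (-1 : ℝ) ^ j * (-1 : ℝ) ^ j = 1 := by
          rw [← zpow_add₀ hne, show j + j = 2 * j by ring, zpow_mul]
          norm_num
        have h2 : (-1 : ℝ) ^ (-n - j) = -(-1 : ℝ) ^ (-j) := by
          rw [show -n - j = -n + -j by ring, zpow_add₀ hne, hn.neg.neg_one_zpow]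
          ring
        have h3 : (-1 : ℝ) ^ ((-j).toNat) = (-1 : ℝ) ^ j := by
          rw [show ((-1 : ℝ)) ^ ((-j).toNat) = (-1 : ℝ) ^ (((-j).toNat : ℕ) : ℤ) from
            (zpow_natCast _ _).symm, show (((-j).toNat : ℕ) : ℤ) = -j by omega, nz_neg]
        rw [h3]
        calc (-2 : ℝ) * (-1 : ℝ) ^ j * ((-1 : ℝ) ^ (-n - j) * (-1 : ℝ) ^ j)
            = ((-1 : ℝ) ^ j * (-1 : ℝ) ^ j) * (-2 * (-1 : ℝ) ^ (-n - j)) := by ring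
          _ = -2 * (-1 : ℝ) ^ (-n - j) := by rw [h1]; ring
          _ = -2 * (-((-1 : ℝ) ^ (-j))) := by rw [h2]
          _ = 2 * (-1 : ℝ) ^ (-j) := by ring
          _ = 2 * (-1 : ℝ) ^ j := by rw [nz_neg]
    rw [hA, hB, hC]
    abel
lemma psiT_vS_bound (k : ℤ) (S : Finset ℕ+) :
    ∃ (r : ℝ) (S' : Finset ℕ+), psiT k (vS S) = r • vS S'
      ∧ ∀ s ∈ S', ((s : ℕ) : ℤ) ≤ ((S.sup (fun t => (t : ℕ)) : ℕ) : ℤ) + |k| := by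
  have hmemS : ∀ s ∈ S, ((s : ℕ) : ℤ) ≤ ((S.sup (fun t => (t : ℕ)) : ℕ) : ℤ) + |k| := by
    intro s hs
    have h1 : (s : ℕ) ≤ S.sup (fun t => (t : ℕ)) := Finset.le_sup hs
    have h2 : 0 ≤ |k| := abs_nonneg k
    omega
  rcases lt_trichotomy 0 k with hk | hk | hk
  · rw [psiT_pos hk, psi_vS]
    by_cases hmem : k.toNat.toPNat' ∈ S
    · exact ⟨0, S, by rw [if_pos hmem, zero_smul], hmemS⟩
    · refine ⟨(-1 : ℝ) ^ cnt k.toNat.toPNat' S, insert k.toNat.toPNat' S,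
        by rw [if_neg hmem], ?_⟩
      intro s hs
      rcases Finset.mem_insert.1 hs with rfl | hs
      · rw [toP_coe hk]
        have : |k| = k := abs_of_pos hk
        omega
      · exact hmemS s hs
  · subst hk
    rw [psiT_zero]
    refine ⟨(2 : ℝ)⁻¹ * (-1 : ℝ) ^ S.card, S, ?_, hmemS⟩
    simp only [LinearMap.smul_apply, par_vS, smul_smul]
  · rw [psiT_neg hk]
    simp only [LinearMap.smul_apply, psiStar_vS]
    by_cases hmem : (-k).toNat.toPNat' ∈ S
    · refine ⟨(-1 : ℝ) ^ k * ((2 : ℝ)⁻¹ * (-1 : ℝ) ^ cnt (-k).toNat.toPNat' S),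
        S.erase (-k).toNat.toPNat', ?_, ?_⟩
      · rw [if_pos hmem, smul_smul]
      · intro s hs
        exact hmemS s (Finset.mem_of_mem_erase hs)
    · exact ⟨0, S, by rw [if_neg hmem, smul_zero, zero_smul], hmemS⟩
/-- `[α_n, ψ̃_k] = ψ̃_{k-n}` for every odd nonzero integer `n` and every integer `k`
(the coefficient-wise form of `[α_n, ψ(z)] = z^n ψ(z)`). -/
theorem alpha_psiT_commutation (n : ℤ) (hn : Odd n) (hn0 : n ≠ 0) (k : ℤ) :
    alpha n ∘ₗ psiT k - psiT k ∘ₗ alpha n = psiT (k - n) := by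
  apply w_ext; intro S
  have ha1 : (0 : ℤ) ≤ |n| := abs_nonneg n
  have ha2 : (0 : ℤ) ≤ |k| := abs_nonneg k
  have ha3 : |n| = n ∨ |n| = -n := abs_choice n
  have ha4 : |k| = k ∨ |k| = -k := abs_choice k
  have ha5 : n ≠ 0 := hn0
  set B : ℤ := ((S.sup (fun t => (t : ℕ)) : ℕ) : ℤ) with hBdef
  have hB0 : 0 ≤ B := Int.natCast_nonneg _
  set M : ℤ := |n| + |k| + B with hMdef
  obtain ⟨r, S', hS', hbound⟩ := psiT_vS_bound k S
  have hMn : |n| ≤ M := by omega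
  have h1 : alpha n (vS S) = Aop n M (vS S) := by
    refine alpha_eq_Aop n hn hn0 S M hMn ?_
    intro s hs
    have h1 : (s : ℕ) ≤ S.sup (fun t => (t : ℕ)) := Finset.le_sup hs
    omega
  have h2 : alpha n (psiT k (vS S)) = Aop n M (psiT k (vS S)) := by
    rw [hS', map_smul, map_smul]
    congr 1
    refine alpha_eq_Aop n hn hn0 S' M hMn ?_
    intro s hs
    have := hbound s hs
    omega
  simp only [LinearMap.sub_apply, LinearMap.comp_apply]
  rw [h2, h1]
  have hc := congrArg (fun f : W →ₗ[ℝ] W => f (vS S))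
    (Aop_comm n M k hn (by rcases ha3 with h | h <;> rcases ha4 with h' | h' <;> omega)
      (by rcases ha3 with h | h <;> rcases ha4 with h' | h' <;> omega))
  simpa only [LinearMap.sub_apply, LinearMap.comp_apply] using hc

end
end

section
/- For all integers k and l: ⟨ψ̃_k ψ̃_l v_∅, v_∅⟩ equals 1/4 if k = l = 0, equals (−1)^l/2 if l ≥ 1 and k = −l, and equals 0 otherwise. Consequently, for all complex numbers z,w with 0 < |w| < |z|, the doubly indexed series ∑_{k,l∈ℤ} z^k w^l ⟨ψ̃_k ψ̃_l v_∅, v_∅⟩ converges absolutely to (z−w)/(4(z+w)). -/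
open scoped BigOperators

noncomputable section

lemma innerW_vac (f : W) : innerW f vac = f ∅ := by
  classical
  rw [innerW]
  rw [Finsupp.sum_eq_single ∅ (fun b hb hne => ?_) (by simp)]
  · simp [vac, vS, Finsupp.single_apply]
  · simp [vac, vS, Finsupp.single_apply, Ne.symm hne]

lemma psiT_vac (l : ℤ) : psiT l vac =
    if 0 < l then vS {l.toNat.toPNat'} else if l = 0 then (2:ℝ)⁻¹ • vac else 0 := by
  rcases lt_trichotomy l 0 with h | h | h
  · simp only [psiT, if_neg (by omega : ¬ 0 < l), if_neg (by omega : ¬ l = 0),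
      if_neg (by omega : ¬ 0 < l)]
    rw [LinearMap.smul_apply]
    rw [vac, psiStar, onBasis_vS]
    simp
  · subst h; simp only [psiT, lt_irrefl, if_neg, if_pos rfl, ite_false, ite_true]
    rw [LinearMap.smul_apply, vac, par, onBasis_vS]; simp
  · simp only [psiT, if_pos h]
    rw [vac, psi, onBasis_vS]
    simp


lemma neg_one_zpow_neg (l : ℤ) : (-1 : ℝ) ^ (-l) = (-1 : ℝ) ^ l := by
  rw [zpow_neg, ← inv_zpow, inv_neg, inv_one]

lemma key (k l : ℤ) : innerW (psiT k (psiT l vac)) vac =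
    if k = 0 ∧ l = 0 then 1 / 4
    else if 1 ≤ l ∧ k = -l then (-1 : ℝ) ^ l / 2
    else 0 := by
  rw [innerW_vac, psiT_vac]
  rcases lt_trichotomy l 0 with hl | hl | hl
  · rw [if_neg (by omega : ¬ 0 < l), if_neg (by omega : ¬ l = 0)]
    rw [if_neg (by omega : ¬ (k = 0 ∧ l = 0)), if_neg (by omega : ¬ (1 ≤ l ∧ k = -l))]
    simp
  · subst hl
    rw [if_neg (by omega : ¬ (0:ℤ) < 0), if_pos rfl, if_neg (by omega : ¬ (1 ≤ (0:ℤ) ∧ k = -0))]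
    rw [map_smul]
    rw [psiT_vac]
    rcases lt_trichotomy k 0 with hk | hk | hk
    · rw [if_neg (by omega : ¬ 0 < k), if_neg (by omega : ¬ k = 0),
        if_neg (by omega : ¬ (k = 0 ∧ (0:ℤ) = 0))]
      simp
    · subst hk
      rw [if_neg (by omega : ¬ (0:ℤ) < 0), if_pos rfl, if_pos ⟨rfl, rfl⟩]
      simp [vac, vS, Finsupp.single_apply]
      norm_num
    · rw [if_pos hk, if_neg (by omega : ¬ (k = 0 ∧ (0:ℤ) = 0))]
      simp [vS, Finsupp.single_apply]
  · rw [if_pos hl, if_neg (by omega : ¬ (k = 0 ∧ l = 0))]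
    set pl : ℕ+ := l.toNat.toPNat' with hpl
    rcases lt_trichotomy k 0 with hk | hk | hk
    · rw [psiT, if_neg (by omega : ¬ 0 < k), if_neg (by omega : ¬ k = 0)]
      rw [LinearMap.smul_apply, psiStar, onBasis_vS]
      set pk : ℕ+ := (-k).toNat.toPNat' with hpk
      have hco : (pk : ℕ) = (-k).toNat := (by rw [Nat.toPNat'_coe, if_pos (by omega)])
      have hcl : (pl : ℕ) = l.toNat := (by rw [Nat.toPNat'_coe, if_pos (by omega)])
      by_cases hkl : k = -l
      · have hmem : pk ∈ ({pl} : Finset ℕ+) := by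
          rw [Finset.mem_singleton]
          apply PNat.coe_injective
          rw [hco, hcl]; omega
        rw [if_pos hmem, if_pos ⟨hl, hkl⟩]
        have hpe : pk = pl := Finset.mem_singleton.mp hmem
        rw [hpe]
        have hne : ((-1 : ℝ) ^ l)⁻¹ = (-1 : ℝ) ^ l := by
          rw [← zpow_neg, neg_one_zpow_neg]
        have : ({pl} : Finset ℕ+).filter (fun s => pl < s) = ∅ := by
          simp [Finset.filter_singleton]
        rw [this]
        simp [vS, Finsupp.single_apply, hkl, neg_one_zpow_neg, hne]
        ring
      · have hmem : pk ∉ ({pl} : Finset ℕ+) := by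
          rw [Finset.mem_singleton]
          intro h
          apply hkl
          have := congrArg (fun x : ℕ+ => (x : ℕ)) h
          simp only [hco, hcl] at this; omega
        rw [if_neg hmem, if_neg (by tauto : ¬ (1 ≤ l ∧ k = -l))]
        simp
    · subst hk
      rw [if_neg (by omega : ¬ (1 ≤ l ∧ (0:ℤ) = -l))]
      rw [psiT, if_neg (by omega : ¬ (0:ℤ) < 0), if_pos rfl]
      rw [LinearMap.smul_apply, par, onBasis_vS]
      simp [vS, Finsupp.single_apply]
    · rw [if_neg (by omega : ¬ (1 ≤ l ∧ k = -l))]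
      rw [psiT, if_pos hk, psi, onBasis_vS]
      by_cases hmem : k.toNat.toPNat' ∈ ({pl} : Finset ℕ+)
      · rw [if_pos hmem]; simp
      · rw [if_neg hmem]
        simp [vS, Finsupp.single_apply, Finset.insert_ne_empty]

set_option maxHeartbeats 1000000 in
lemma part2 (z w : ℂ) (hw : 0 < ‖w‖) (hzw : ‖w‖ < ‖z‖) :
    Summable (fun p : ℤ × ℤ =>
        ‖z ^ p.1 * w ^ p.2 * ((innerW (psiT p.1 (psiT p.2 vac)) vac : ℝ) : ℂ)‖) ∧
      ∑' p : ℤ × ℤ, z ^ p.1 * w ^ p.2 * ((innerW (psiT p.1 (psiT p.2 vac)) vac : ℝ) : ℂ) =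
        (z - w) / (4 * (z + w)) := by
  have hz : z ≠ 0 := by
    intro h; rw [h] at hzw; simp at hzw; exact absurd hzw (not_lt.mpr (norm_nonneg w))
  have hzw0 : z + w ≠ 0 := by
    intro h
    have : z = -w := by linear_combination h
    rw [this] at hzw; simp at hzw
  set r : ℂ := -w / z with hrdef
  have hr : ‖r‖ < 1 := by
    rw [hrdef, norm_div, norm_neg]
    rw [div_lt_one (by simpa using hw.trans hzw)]
    exact hzw
  set F : ℤ × ℤ → ℂ := fun p =>
    z ^ p.1 * w ^ p.2 * ((innerW (psiT p.1 (psiT p.2 vac)) vac : ℝ) : ℂ) with hF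
  set G : ℕ → ℂ := fun n => if n = 0 then (1/4 : ℂ) else r ^ n / 2 with hG
  set e : ℕ → ℤ × ℤ := fun n => if n = 0 then (0, 0) else (-(n : ℤ), (n : ℤ)) with he
  have hinj : Function.Injective e := by
    intro a b hab
    by_cases ha : a = 0 <;> by_cases hb : b = 0 <;>
      simp [he, ha, hb, Prod.ext_iff] at hab ⊢ <;> omega
  have hFe : ∀ n, F (e n) = G n := by
    intro n
    rcases Nat.eq_zero_or_pos n with hn | hn
    · subst hn
      simp only [hF, he, hG, if_pos rfl]
      rw [key]
      norm_num
    · have hn0 : n ≠ 0 := by omega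
      simp only [hF, he, hG, if_neg hn0]
      rw [key]
      rw [if_neg (by omega), if_pos ⟨by omega, rfl⟩]
      push_cast
      rw [zpow_neg, zpow_natCast, zpow_natCast, zpow_natCast]
      rw [hrdef, div_pow, neg_pow w]
      field_simp
  have hsupp : ∀ p : ℤ × ℤ, p ∉ Set.range e → F p = 0 := by
    intro p hp
    simp only [hF]
    rw [key]
    rcases p with ⟨k, l⟩
    by_cases h1 : k = 0 ∧ l = 0
    · exact absurd ⟨0, by simp [he, Prod.ext_iff, h1.1, h1.2]⟩ hp
    · rw [if_neg h1]
      by_cases h2 : 1 ≤ l ∧ k = -l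
      · refine absurd ⟨l.toNat, ?_⟩ hp
        have hln : l.toNat ≠ 0 := by omega
        simp only [he, if_neg hln, Prod.ext_iff]
        constructor <;> simp <;> omega
      · rw [if_neg h2]; simp
  have hGnorm : Summable (fun n => ‖G n‖) := by
    apply (summable_nat_add_iff 1).mp
    have : (fun n : ℕ => ‖G (n + 1)‖) = fun n : ℕ => ‖r‖ ^ (n + 1) / 2 := by
      funext n
      simp [hG, norm_div, norm_pow]
    rw [this]
    exact (summable_nat_add_iff 1).mpr
      ((summable_geometric_of_lt_one (norm_nonneg _) hr).div_const 2)
  have hGsum : Summable G := hGnorm.of_norm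
  have hsuppF : Function.support F ⊆ Set.range e := by
    intro p hp
    by_contra h
    exact hp (hsupp p h)
  have hFsum : Summable F := by
    rw [← hinj.summable_iff hsupp]
    exact hGsum.congr fun n => (hFe n).symm
  constructor
  · rw [← hinj.summable_iff (fun p hp => by show ‖F p‖ = 0; rw [hsupp p hp]; simp)]
    apply hGnorm.congr
    intro n
    show ‖G n‖ = ‖F (e n)‖
    rw [hFe n]
  · have h1 : ∑' p : ℤ × ℤ, F p = ∑' n : ℕ, G n := by
      rw [← hinj.tsum_eq hsuppF]
      exact tsum_congr hFe
    rw [h1]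
    have hGdecomp : ∀ n : ℕ, G n = r ^ n / 2 + if n = 0 then (1/4 - 1/2 : ℂ) else 0 := by
      intro n
      by_cases hn : n = 0 <;> simp [hG, hn] <;> ring
    rw [tsum_congr hGdecomp]
    have hs1 : Summable (fun n : ℕ => r ^ n / 2) :=
      (summable_geometric_of_norm_lt_one hr).div_const 2
    have hs2 : Summable (fun n : ℕ => if n = 0 then (1/4 - 1/2 : ℂ) else 0) :=
      summable_of_ne_finset_zero (s := {0}) (fun b hb => by simp at hb; simp [hb])
    rw [Summable.tsum_add hs1 hs2]
    rw [tsum_div_const, tsum_geometric_of_norm_lt_one hr, tsum_ite_eq 0 (fun _ => (1/4 - 1/2 : ℂ))]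
    have h1r : (1 : ℂ) - r = (z + w) / z := by
      rw [hrdef]; field_simp; ring
    rw [h1r]
    have final : ((z+w)/z)⁻¹/2 + (1/4 - 1/2 : ℂ) = (z-w)/(4*(z+w)) := by
      rw [inv_div]; field_simp; ring
    exact final


/-- `⟨ψ̃_k ψ̃_l v_∅, v_∅⟩` equals `1/4` if `k = l = 0`, `(-1)^l/2` if `l ≥ 1, k = -l`,
and `0` otherwise; consequently for complex `z, w` with `0 < |w| < |z|` the series
`∑_{k,l} z^k w^l ⟨ψ̃_k ψ̃_l v_∅, v_∅⟩` converges absolutely to `(z-w)/(4(z+w))`. -/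
theorem psiT_vacuum_expectation :
    (∀ k l : ℤ, innerW (psiT k (psiT l vac)) vac =
      if k = 0 ∧ l = 0 then 1 / 4
      else if 1 ≤ l ∧ k = -l then (-1 : ℝ) ^ l / 2
      else 0) ∧
    (∀ z w : ℂ, 0 < ‖w‖ → ‖w‖ < ‖z‖ →
      Summable (fun p : ℤ × ℤ =>
        ‖z ^ p.1 * w ^ p.2 * ((innerW (psiT p.1 (psiT p.2 vac)) vac : ℝ) : ℂ)‖) ∧
      ∑' p : ℤ × ℤ, z ^ p.1 * w ^ p.2 * ((innerW (psiT p.1 (psiT p.2 vac)) vac : ℝ) : ℂ) =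
        (z - w) / (4 * (z + w))) := by
  exact ⟨key, part2⟩

end
end
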